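/- Let μ be a positive integer and define F : ℤ → ℤ by F(x) = μ·x·(x+1). For every n ≥ 1 there exist positive integers a_{i,n} for 3 ≤ i ≤ 2^n such that for all x ∈ ℤ, the n-th iterate satisfies F^[n](x) = (∑_{i=3}^{2^n} a_{i,n}·x^i) + (∑_{j=n}^{2n-1} μ^j)·x^2 + μ^n·x. -/

import Mathlib

open Polynomial Finset

private noncomputable def logP (μ : ℕ) : ℕ → Polynomial ℤ
  | 0 => X
  | n + 1 => C (μ : ℤ) * ((logP μ n) ^ 2 + logP μ n)

private lemma logP_eval (μ : ℕ) (n : ℕ) (x : ℤ) :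
    (fun y : ℤ => (μ : ℤ) * y * (y + 1))^[n] x = (logP μ n).eval x := by
  induction n with
  | zero => simp [logP]
  | succ n ih =>
    rw [Function.iterate_succ_apply', ih, logP]
    simp; ring

private lemma mul_sum_pow (μ : ℕ) (a b : ℕ) :
    (μ : ℤ) * ∑ j ∈ Icc a b, (μ : ℤ) ^ j = ∑ j ∈ Icc (a + 1) (b + 1), (μ : ℤ) ^ j := by
  rw [← Finset.image_add_right_Icc, Finset.sum_image (by intro x _ y _ h; exact Nat.add_right_cancel h), Finset.mul_sum]
  exact Finset.sum_congr rfl fun j _ => by ring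

private lemma logP_key (μ : ℕ) (hμ : 0 < μ) : ∀ n, 1 ≤ n →
    (logP μ n).coeff 0 = 0 ∧ (logP μ n).coeff 1 = (μ : ℤ) ^ n ∧
    (logP μ n).coeff 2 = ∑ j ∈ Icc n (2 * n - 1), (μ : ℤ) ^ j ∧
    (∀ i, 0 ≤ (logP μ n).coeff i) ∧
    (∀ i, 3 ≤ i → i ≤ 2 ^ n → 0 < (logP μ n).coeff i) ∧
    (∀ i, 2 ^ n < i → (logP μ n).coeff i = 0) := by
  intro n hn
  induction n with
  | zero => omega
  | succ n ih =>
    rcases Nat.eq_zero_or_pos n with rfl | hn'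
    · -- base case n = 1
      have hp : logP μ 1 = C (μ : ℤ) * (X ^ 2 + X) := by simp [logP]
      refine ⟨?_, ?_, ?_, ?_, ?_, ?_⟩
      · simp [hp, coeff_X, coeff_X_pow]
      · simp [hp, coeff_X, coeff_X_pow]
      · rw [show 2 * (0+1) - 1 = 1 by rfl, Finset.Icc_self, Finset.sum_singleton]
        simp [hp, coeff_X, coeff_X_pow]
      · intro i
        rcases Nat.lt_or_ge i 3 with h | h
        · interval_cases i <;> simp [hp, coeff_X, coeff_X_pow]
        · simp only [hp, coeff_C_mul, coeff_add, coeff_X_pow, coeff_X]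
          rw [if_neg (by omega), if_neg (by omega)]; simp
      · intro i hi1 hi2; omega
      · intro i hi
        simp only [hp, coeff_C_mul, coeff_add, coeff_X_pow, coeff_X]
        rw [if_neg (by omega), if_neg (by omega)]; simp
    · obtain ⟨h0, h1, h2, hnn, hpos, hvan⟩ := ih hn'
      set p := logP μ n with hp
      have hposall : ∀ i, 1 ≤ i → i ≤ 2 ^ n → 0 < p.coeff i := by
        intro i hi1 hi2
        rcases Nat.lt_or_ge i 3 with h | h
        · interval_cases i
          · rw [h1]; positivity
          · rw [h2]
            apply Finset.sum_pos (fun j _ => by positivity)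
            exact Finset.nonempty_Icc.2 (by omega)
        · exact hpos i h hi2
      have hq : logP μ (n + 1) = C (μ : ℤ) * (p ^ 2 + p) := rfl
      have hco : ∀ k, (logP μ (n + 1)).coeff k =
          (μ : ℤ) * ((∑ ij ∈ Finset.HasAntidiagonal.antidiagonal k, p.coeff ij.1 * p.coeff ij.2) + p.coeff k) := by
        intro k
        rw [hq, coeff_C_mul, coeff_add, sq, coeff_mul]
      have h2n : 2 ≤ 2 ^ n := by
        calc 2 = 2 ^ 1 := rfl
        _ ≤ 2 ^ n := Nat.pow_le_pow_right (by norm_num) hn'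
      refine ⟨?_, ?_, ?_, ?_, ?_, ?_⟩
      · rw [hco]; simp [Finset.Nat.antidiagonal_zero, h0]
      · rw [hco, h1]
        rw [show Finset.HasAntidiagonal.antidiagonal 1 = {(0,1),(1,0)} from rfl]
        simp [h0]; ring
      · rw [hco]
        rw [show Finset.HasAntidiagonal.antidiagonal 2 = {(0,2),(1,1),(2,0)} from rfl]
        rw [Finset.sum_insert (by decide), Finset.sum_insert (by decide), Finset.sum_singleton]
        simp only [h0, h1, h2, zero_mul, mul_zero, zero_add, add_zero]
        rw [mul_add, show ((μ:ℤ)^n * μ^n) = μ^(2*n) by ring, mul_sum_pow]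
        have e1 : 2 * n - 1 + 1 = 2 * n := by omega
        have e2 : 2 * (n+1) - 1 = 2 * n + 1 := by omega
        rw [e1, e2, Finset.sum_Icc_succ_top (show n+1 ≤ 2*n+1 by omega)]
        rw [show (μ:ℤ) * μ^(2*n) = μ^(2*n+1) by ring]
        ring
      · intro i
        rw [hco]
        have : (0:ℤ) ≤ μ := by positivity
        apply mul_nonneg this
        apply add_nonneg _ (hnn i)
        exact Finset.sum_nonneg fun ij _ => mul_nonneg (hnn _) (hnn _)
      · intro k hk3 hk2
        rw [hco]
        apply mul_pos (by positivity)
        have hsum : 0 < ∑ ij ∈ Finset.HasAntidiagonal.antidiagonal k, p.coeff ij.1 * p.coeff ij.2 := by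
          apply Finset.sum_pos' (fun ij _ => mul_nonneg (hnn _) (hnn _))
          rcases le_or_gt k (2 ^ n + 1) with h | h
          · refine ⟨(1, k - 1), Finset.HasAntidiagonal.mem_antidiagonal.2 (by omega), ?_⟩
            exact mul_pos (hposall 1 le_rfl (by omega)) (hposall (k-1) (by omega) (by omega))
          · refine ⟨(k - 2 ^ n, 2 ^ n), Finset.HasAntidiagonal.mem_antidiagonal.2 (by omega), ?_⟩
            have hk' : k ≤ 2 ^ (n + 1) := hk2
            have : 2 ^ (n+1) = 2 ^ n + 2 ^ n := by rw [pow_succ]; ring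
            exact mul_pos (hposall _ (by omega) (by omega)) (hposall _ (by omega) le_rfl)
        have := hnn k
        linarith
      · intro k hk
        rw [hco]
        have hk' : 2 ^ (n+1) < k := hk
        have h2 : 2 ^ (n+1) = 2 ^ n + 2 ^ n := by rw [pow_succ]; ring
        rw [hvan k (by omega), Finset.sum_eq_zero ?_]
        · simp
        intro ij hij
        rw [Finset.HasAntidiagonal.mem_antidiagonal] at hij
        rcases le_or_gt ij.1 (2 ^ n) with h | h
        · rw [hvan ij.2 (by omega), mul_zero]
        · rw [hvan ij.1 h, zero_mul]

theorem logistic_iterate_expansion (μ : ℕ) (hμ : 0 < μ) (n : ℕ) (hn : 1 ≤ n) :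
    ∃ a : ℕ → ℤ, (∀ i, 3 ≤ i → i ≤ 2 ^ n → 0 < a i) ∧
      ∀ x : ℤ,
        (fun y : ℤ => (μ : ℤ) * y * (y + 1))^[n] x =
          (∑ i ∈ Finset.Icc 3 (2 ^ n), a i * x ^ i) +
            (∑ j ∈ Finset.Icc n (2 * n - 1), (μ : ℤ) ^ j) * x ^ 2 + (μ : ℤ) ^ n * x := by
  obtain ⟨h0, h1, h2, hnn, hpos, hvan⟩ := logP_key μ hμ n hn
  refine ⟨fun i => (logP μ n).coeff i, hpos, fun x => ?_⟩
  rw [logP_eval]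
  have hdeg : (logP μ n).natDegree < 2 ^ n + 1 :=
    Nat.lt_succ_of_le (Polynomial.natDegree_le_iff_coeff_eq_zero.2 hvan)
  rw [Polynomial.eval_eq_sum_range' hdeg x]
  have h2n : 2 ≤ 2 ^ n := by
    calc 2 = 2 ^ 1 := rfl
    _ ≤ 2 ^ n := Nat.pow_le_pow_right (by norm_num) hn
  rw [Finset.range_eq_Ico, ← Finset.sum_Ico_consecutive _ (show 0 ≤ 3 by omega) (show 3 ≤ 2^n+1 by omega)]
  simp only [Finset.Ico_add_one_right_eq_Icc]
  rw [show Finset.Ico 0 3 = {0, 1, 2} from rfl]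
  rw [Finset.sum_insert (by simp), Finset.sum_insert (by simp), Finset.sum_singleton]
  rw [h0, h1, h2]
  ring
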